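/- There is a universal constant C₀ ≥ 1 such that the following holds for all integers d,k,μ ≥ 1 and all ε > 0: for every (μ,ε)-curve P of complexity at most k in ℝ^d and every Δ > 0, there exists a set 𝒟 of (μ,ε)-curves of complexity at most k in ℝ^d with |𝒟| ≤ (C₀^d · k · μ)^k such that every (μ,ε)-curve Q of complexity at most k with discrete Fréchet distance d_dF(P,Q) ≤ Δ satisfies d_dF(Q,Q*) ≤ Δ/2 for some Q* ∈ 𝒟. (Hence the doubling dimension of the space of (μ,ε)-curves of complexity at most k under the discrete Fréchet distance is O(k(d + log(kμ))).) -/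

import Mathlib

open Set Metric Function
open ENNReal

noncomputable section

/-- Euclidean space ℝ^d. -/
abbrev Euc (d : ℕ) := EuclideanSpace ℝ (Fin d)

/-- The polygonal curve (parametrized over `[0,1]`) obtained by concatenating the
segments between consecutive vertices `p 0, p 1, …, p n`. -/
def curveMap {d n : ℕ} (p : Fin (n + 1) → Euc d) (t : ℝ) : Euc d :=
  if h : n = 0 then p 0
  else
    (1 - (t * n - (min ⌊t * (n : ℝ)⌋₊ (n - 1) : ℕ))) • p ⟨min ⌊t * (n : ℝ)⌋₊ (n - 1), by omega⟩
      + (t * n - (min ⌊t * (n : ℝ)⌋₊ (n - 1) : ℕ)) • p ⟨min ⌊t * (n : ℝ)⌋₊ (n - 1) + 1, by omega⟩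

/-- A reparametrization: a continuous non-decreasing surjection of `[0,1]` onto itself. -/
def IsRepar (f : ℝ → ℝ) : Prop :=
  ContinuousOn f (Icc 0 1) ∧ MonotoneOn f (Icc 0 1) ∧ f '' Icc 0 1 = Icc 0 1

/-- The (continuous) Fréchet distance between two curves `[0,1] → ℝ^d`. -/
def frechetDist {d : ℕ} (P Q : ℝ → Euc d) : ℝ :=
  sInf { r : ℝ | ∃ f g : ℝ → ℝ, IsRepar f ∧ IsRepar g ∧
    ∀ t ∈ Icc (0 : ℝ) 1, dist (P (f t)) (Q (g t)) ≤ r }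

/-- The edge (segment curve) from `a` to `b`, parametrized over `[0,1]`. -/
def seg {d : ℕ} (a b : Euc d) (t : ℝ) : Euc d := (1 - t) • a + t • b

/-- The subcurve `P[s,t]` of `P`, reparametrized over `[0,1]`. -/
def subcurve {d : ℕ} (P : ℝ → Euc d) (s t : ℝ) (u : ℝ) : Euc d := P (s + u * (t - s))

/-- All edge lengths of the polygonal curve with vertices `p` are at most `Λ`. -/
def EdgeLenLe {d n : ℕ} (p : Fin (n + 1) → Euc d) (Λ : ℝ) : Prop :=
  ∀ i : Fin n, dist (p i.castSucc) (p i.succ) ≤ Λ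

/-- The vertices `p` define a `(μ,ε)`-curve: each edge length is a non-negative integer
multiple of `ε` and is at most `μ·ε`. -/
def IsMuEpsEdges {d n : ℕ} (p : Fin (n + 1) → Euc d) (μ : ℕ) (ε : ℝ) : Prop :=
  ∀ i : Fin n, (∃ m : ℕ, dist (p i.castSucc) (p i.succ) = m * ε) ∧
    dist (p i.castSucc) (p i.succ) ≤ μ * ε

/-- The `Δ`-neighbourhood of a set `A ⊆ ℝ^d`. -/
def nbhd {d : ℕ} (A : Set (Euc d)) (Δ : ℝ) : Set (Euc d) :=
  { x | ∃ a ∈ A, dist x a ≤ Δ }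

/-- The discrete Fréchet distance between the vertex sequences `x` and `y`: the infimum over
monotone couplings (pairs of non-decreasing surjections from a common index set) of the
maximal distance between coupled vertices. -/
def discreteFrechet {d n m : ℕ} (x : Fin (n + 1) → Euc d) (y : Fin (m + 1) → Euc d) : ℝ :=
  sInf { r : ℝ | ∃ (N : ℕ) (f : Fin (N + 1) → Fin (n + 1)) (g : Fin (N + 1) → Fin (m + 1)),
    Monotone f ∧ Monotone g ∧ Surjective f ∧ Surjective g ∧
    ∀ i, dist (x (f i)) (y (g i)) ≤ r }


open MeasureTheory in
lemma sep_finset_card_le {d : ℕ} (x : Euc d) {r ρ : ℝ} (hr : 0 ≤ r) (hρ : 0 < ρ)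
    (t : Finset (Euc d)) (hsub : ∀ a ∈ t, a ∈ closedBall x r)
    (hsep : ∀ a ∈ t, ∀ b ∈ t, a ≠ b → ρ ≤ dist a b) :
    (t.card : ℝ) ≤ (2 * (r + ρ) / ρ) ^ d := by
  classical
  have hdisj : (↑t : Set (Euc d)).PairwiseDisjoint (fun a => ball a (ρ / 2)) := by
    intro a ha b hb hab
    exact ball_disjoint_ball (by linarith [hsep a ha b hb hab])
  have hsum : ∑ a ∈ t, volume (ball a (ρ / 2)) = volume (⋃ a ∈ t, ball a (ρ / 2)) :=
    (measure_biUnion_finset hdisj fun _ _ => measurableSet_ball).symm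
  have hsub2 : (⋃ a ∈ t, ball a (ρ / 2)) ⊆ ball x (r + ρ) := by
    intro y hy
    simp only [Set.mem_iUnion] at hy
    obtain ⟨a, ha, hya⟩ := hy
    have h1 : dist a x ≤ r := hsub a ha
    have h2 : dist y a < ρ / 2 := hya
    have := dist_triangle y a x
    simp only [mem_ball]
    linarith
  set v := volume (ball (0 : Euc d) 1) with hv
  have hv0 : v ≠ 0 := (measure_ball_pos _ _ one_pos).ne'
  have hvt : v ≠ ⊤ := measure_ball_lt_top.ne
  have hball : ∀ a : Euc d, volume (ball a (ρ / 2)) = ENNReal.ofReal ((ρ / 2) ^ d) * v := by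
    intro a
    rw [Measure.addHaar_ball_of_pos volume a (by positivity), finrank_euclideanSpace_fin]
  have hbig : volume (ball x (r + ρ)) = ENNReal.ofReal ((r + ρ) ^ d) * v := by
    rw [Measure.addHaar_ball_of_pos volume x (by positivity), finrank_euclideanSpace_fin]
  have key : (t.card : ℝ≥0∞) * ENNReal.ofReal ((ρ / 2) ^ d) * v ≤ ENNReal.ofReal ((r + ρ) ^ d) * v := by
    calc (t.card : ℝ≥0∞) * ENNReal.ofReal ((ρ / 2) ^ d) * v
        = ∑ _a ∈ t, ENNReal.ofReal ((ρ / 2) ^ d) * v := by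
          rw [Finset.sum_const, nsmul_eq_mul, mul_assoc]
      _ = ∑ a ∈ t, volume (ball a (ρ / 2)) := by
          exact Finset.sum_congr rfl fun a _ => (hball a).symm
      _ = volume (⋃ a ∈ t, ball a (ρ / 2)) := hsum
      _ ≤ volume (ball x (r + ρ)) := measure_mono hsub2
      _ = ENNReal.ofReal ((r + ρ) ^ d) * v := hbig
  have key2 : (t.card : ℝ≥0∞) * ENNReal.ofReal ((ρ / 2) ^ d) ≤ ENNReal.ofReal ((r + ρ) ^ d) :=
    (ENNReal.mul_le_mul_iff_left hv0 hvt).mp key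
  have h1 : (t.card : ℝ) * (ρ / 2) ^ d ≤ (r + ρ) ^ d := by
    rw [← ENNReal.ofReal_natCast, ← ENNReal.ofReal_mul (by positivity)] at key2
    exact (ENNReal.ofReal_le_ofReal_iff (by positivity)).mp key2
  have hpow : (0 : ℝ) < (ρ / 2) ^ d := by positivity
  rw [show 2 * (r + ρ) / ρ = (r + ρ) / (ρ / 2) by field_simp, div_pow, le_div_iff₀ hpow]
  exact h1

lemma exists_net {d : ℕ} (x : Euc d) {r ρ : ℝ} (hr : 0 ≤ r) (hρ : 0 < ρ) :
    ∃ s : Finset (Euc d), (s.card : ℝ) ≤ (2 * (r + ρ) / ρ) ^ d ∧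
      ∀ y ∈ closedBall x r, ∃ a ∈ s, dist y a < ρ := by
  classical
  set 𝒞 : Set ℕ := {c | ∃ t : Finset (Euc d), (∀ a ∈ t, a ∈ closedBall x r) ∧
      (∀ a ∈ t, ∀ b ∈ t, a ≠ b → ρ ≤ dist a b) ∧ t.card = c} with h𝒞
  have hbdd : BddAbove 𝒞 := by
    refine ⟨⌊(2 * (r + ρ) / ρ) ^ d⌋₊, ?_⟩
    rintro c ⟨t, h1, h2, rfl⟩
    exact Nat.le_floor (sep_finset_card_le x hr hρ t h1 h2)
  have hne : 𝒞.Nonempty := ⟨0, ∅, by simp, by simp, rfl⟩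
  obtain ⟨t, h1, h2, h3⟩ := Nat.sSup_mem hne hbdd
  refine ⟨t, sep_finset_card_le x hr hρ t h1 h2, ?_⟩
  intro y hy
  by_contra hcon
  push_neg at hcon
  have hyt : y ∉ t := fun hyt => by
    have := hcon y hyt
    rw [dist_self] at this
    linarith
  have hmem : t.card + 1 ∈ 𝒞 := by
    refine ⟨insert y t, ?_, ?_, by rw [Finset.card_insert_of_notMem hyt]⟩
    · intro a ha
      rcases Finset.mem_insert.mp ha with rfl | ha
      · exact hy
      · exact h1 a ha
    · intro a ha b hb hab
      rcases Finset.mem_insert.mp ha with ha' | ha'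
      · rcases Finset.mem_insert.mp hb with hb' | hb'
        · exact absurd (ha'.trans hb'.symm) hab
        · rw [ha']; exact hcon b hb'
      · rcases Finset.mem_insert.mp hb with hb' | hb'
        · rw [hb', dist_comm]; exact hcon a ha'
        · exact h2 a ha' b hb' hab
  have := le_csSup hbdd hmem
  omega

lemma coupling_bddBelow {d n m : ℕ} (x : Fin (n + 1) → Euc d) (y : Fin (m + 1) → Euc d) :
    BddBelow { r : ℝ | ∃ (N : ℕ) (f : Fin (N + 1) → Fin (n + 1)) (g : Fin (N + 1) → Fin (m + 1)),
      Monotone f ∧ Monotone g ∧ Surjective f ∧ Surjective g ∧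
      ∀ i, dist (x (f i)) (y (g i)) ≤ r } :=
  ⟨0, fun r ⟨_, _, _, _, _, _, _, hb⟩ => le_trans dist_nonneg (hb 0)⟩

lemma coupling_nonempty {d n m : ℕ} (x : Fin (n + 1) → Euc d) (y : Fin (m + 1) → Euc d) :
    { r : ℝ | ∃ (N : ℕ) (f : Fin (N + 1) → Fin (n + 1)) (g : Fin (N + 1) → Fin (m + 1)),
      Monotone f ∧ Monotone g ∧ Surjective f ∧ Surjective g ∧
      ∀ i, dist (x (f i)) (y (g i)) ≤ r }.Nonempty := by
  classical
  refine ⟨∑ i : Fin (n + m + 1), dist (x ⟨min i.1 n, by omega⟩) (y ⟨i.1 - n, by omega⟩),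
    n + m, fun i => ⟨min i.1 n, by omega⟩, fun i => ⟨i.1 - n, by omega⟩, ?_, ?_, ?_, ?_, ?_⟩
  · intro a b hab
    have : a.1 ≤ b.1 := hab
    exact Fin.mk_le_mk.mpr (by omega)
  · intro a b hab
    have : a.1 ≤ b.1 := hab
    exact Fin.mk_le_mk.mpr (by omega)
  · intro j
    exact ⟨⟨j.1, by omega⟩, Fin.ext (by have := j.2; simp; omega)⟩
  · intro l
    exact ⟨⟨n + l.1, by omega⟩, Fin.ext (by have := l.2; simp)⟩
  · intro i
    exact Finset.single_le_sum
      (f := fun j : Fin (n + m + 1) => dist (x ⟨min j.1 n, by omega⟩) (y ⟨j.1 - n, by omega⟩))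
      (fun j _ => dist_nonneg) (Finset.mem_univ i)

lemma vertices_close {d n m : ℕ} (x : Fin (n + 1) → Euc d) (y : Fin (m + 1) → Euc d)
    {Δ : ℝ} (hΔ : 0 < Δ) (h : discreteFrechet x y ≤ Δ) (l : Fin (m + 1)) :
    ∃ j : Fin (n + 1), dist (y l) (x j) ≤ 2 * Δ := by
  have hlt : discreteFrechet x y < 2 * Δ := lt_of_le_of_lt h (by linarith)
  rw [discreteFrechet] at hlt
  obtain ⟨r, ⟨N, f, g, _, _, _, hgs, hb⟩, hr2⟩ :=
    (csInf_lt_iff (coupling_bddBelow x y) (coupling_nonempty x y)).mp hlt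
  obtain ⟨i, hi⟩ := hgs l
  exact ⟨f i, by rw [← hi, dist_comm]; exact le_of_lt (lt_of_le_of_lt (hb i) hr2)⟩

lemma discreteFrechet_le_of_vertexwise {d m : ℕ} (x y : Fin (m + 1) → Euc d) {r : ℝ}
    (h : ∀ i, dist (x i) (y i) ≤ r) : discreteFrechet x y ≤ r :=
  csInf_le (coupling_bddBelow x y)
    ⟨m, id, id, monotone_id, monotone_id, surjective_id, surjective_id, h⟩

open Classical in
/-- Choose, if possible, a `(μ,ε)`-curve whose vertices are within `Δ` of the prescribed
points `c`; otherwise return a constant curve. -/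
def pickCurve {d : ℕ} (μ : ℕ) (ε Δ : ℝ) (m : ℕ) (c : Fin (m + 1) → Euc d) :
    Fin (m + 1) → Euc d :=
  if h : ∃ S : Fin (m + 1) → Euc d, IsMuEpsEdges S μ ε ∧ ∀ i, dist (S i) (c i) ≤ Δ
  then h.choose else fun _ => c 0

lemma pickCurve_isMuEps {d : ℕ} {μ : ℕ} {ε Δ : ℝ} (hε : 0 < ε) (m : ℕ)
    (c : Fin (m + 1) → Euc d) : IsMuEpsEdges (pickCurve μ ε Δ m c) μ ε := by
  rw [pickCurve]
  split_ifs with h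
  · exact h.choose_spec.1
  · intro i
    refine ⟨⟨0, by simp⟩, ?_⟩
    simp only [dist_self]
    exact mul_nonneg (Nat.cast_nonneg μ) hε.le

lemma pickCurve_close {d : ℕ} {μ : ℕ} {ε Δ : ℝ} (m : ℕ) (c : Fin (m + 1) → Euc d)
    (h : ∃ S : Fin (m + 1) → Euc d, IsMuEpsEdges S μ ε ∧ ∀ i, dist (S i) (c i) ≤ Δ) :
    ∀ i, dist (pickCurve μ ε Δ m c i) (c i) ≤ Δ := by
  have : pickCurve μ ε Δ m c = h.choose := by rw [pickCurve, dif_pos h]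
  rw [this]
  exact h.choose_spec.2


/-- Corollary 3.13 of the paper. The analogue of the doubling bound for
the discrete Fréchet distance: every discrete-Fréchet ball of radius `Δ` centered at a
`(μ,ε)`-curve of complexity at most `k` can be covered by at most `(C₀^d·k·μ)^k`
discrete-Fréchet balls of radius `Δ/2` centered at `(μ,ε)`-curves. -/
theorem doubling_bound_discrete :
    ∃ C₀ : ℝ, 1 ≤ C₀ ∧
      ∀ (d k μ : ℕ), 1 ≤ d → 1 ≤ k → 1 ≤ μ →
      ∀ ε : ℝ, 0 < ε →
      ∀ (n : ℕ) (P : Fin (n + 1) → Euc d), n + 1 ≤ k → IsMuEpsEdges P μ ε →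
      ∀ Δ : ℝ, 0 < Δ →
      ∃ (M : ℕ) (Q : Fin M → Σ m : ℕ, Fin (m + 1) → Euc d),
        (M : ℝ) ≤ (C₀ ^ d * k * μ) ^ k ∧
        (∀ i, (Q i).1 + 1 ≤ k ∧ IsMuEpsEdges (Q i).2 μ ε) ∧
        ∀ (m : ℕ) (R : Fin (m + 1) → Euc d), m + 1 ≤ k → IsMuEpsEdges R μ ε →
          discreteFrechet P R ≤ Δ →
          ∃ i, discreteFrechet R (Q i).2 ≤ Δ / 2 := by
  classical
  refine ⟨72, by norm_num, ?_⟩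
  intro d k μ hd hk hμ ε hε n P hnk hP Δ hΔ
  have hnet : ∀ j : Fin (n + 1), ∃ s : Finset (Euc d),
      (s.card : ℝ) ≤ 18 ^ d ∧ ∀ y ∈ closedBall (P j) (2 * Δ), ∃ a ∈ s, dist y a < Δ / 4 := by
    intro j
    obtain ⟨s, hc, hcov⟩ :=
      exists_net (P j) (r := 2 * Δ) (ρ := Δ / 4) (by positivity) (by positivity)
    refine ⟨s, ?_, hcov⟩
    have h18 : 2 * (2 * Δ + Δ / 4) / (Δ / 4) = 18 := by field_simp; ring
    rwa [h18] at hc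
  choose s hscard hscov using hnet
  set N : Finset (Euc d) := insert (P 0) (Finset.univ.biUnion s) with hN
  have hNne : (P 0) ∈ N := Finset.mem_insert_self _ _
  have hNpos : 1 ≤ (N.card : ℝ) := by
    exact_mod_cast Finset.card_pos.mpr ⟨P 0, hNne⟩
  have h2d : (2 : ℝ) ≤ 2 ^ d := by
    calc (2 : ℝ) = 2 ^ 1 := (pow_one 2).symm
      _ ≤ 2 ^ d := pow_le_pow_right₀ one_le_two hd
  have h18pos : (1 : ℝ) ≤ 18 ^ d := one_le_pow₀ (by norm_num : (1:ℝ) ≤ 18)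
  have hkR : (1 : ℝ) ≤ (k : ℝ) := by exact_mod_cast hk
  have hNcard : (N.card : ℝ) ≤ (k : ℝ) * 36 ^ d := by
    have h1 : N.card ≤ (Finset.univ.biUnion s).card + 1 := Finset.card_insert_le _ _
    have h2 : (Finset.univ.biUnion s).card ≤ ∑ j : Fin (n + 1), (s j).card :=
      Finset.card_biUnion_le
    have h3 : ((∑ j : Fin (n + 1), (s j).card : ℕ) : ℝ) ≤ ((n : ℝ) + 1) * 18 ^ d := by
      push_cast
      calc ∑ j : Fin (n + 1), ((s j).card : ℝ) ≤ ∑ _j : Fin (n + 1), (18 : ℝ) ^ d :=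
            Finset.sum_le_sum fun j _ => hscard j
        _ = ((n : ℝ) + 1) * 18 ^ d := by
            rw [Finset.sum_const, Finset.card_univ, Fintype.card_fin, nsmul_eq_mul]
            push_cast; ring
    have h4 : (N.card : ℝ) ≤ ((n : ℝ) + 1) * 18 ^ d + 1 := by
      have h5 := le_trans h1 (Nat.add_le_add_right h2 1)
      calc (N.card : ℝ) ≤ ((∑ j : Fin (n + 1), (s j).card : ℕ) : ℝ) + 1 := by
            exact_mod_cast h5
        _ ≤ ((n : ℝ) + 1) * 18 ^ d + 1 := by linarith
    have hk1 : ((n : ℝ) + 1) ≤ (k : ℝ) := by exact_mod_cast hnk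
    have h36 : (36 : ℝ) ^ d = 2 ^ d * 18 ^ d := by rw [← mul_pow]; norm_num
    rw [h36]
    nlinarith [mul_le_mul_of_nonneg_right hk1 (le_trans zero_le_one h18pos)]
  let T := (m : Fin k) × (Fin (m.1 + 1) → {a // a ∈ N})
  let e : T ≃ Fin (Fintype.card T) := Fintype.equivFin T
  refine ⟨Fintype.card T,
    fun i => ⟨(e.symm i).1.1, pickCurve μ ε (Δ / 4) _ (fun j => ((e.symm i).2 j : Euc d))⟩,
    ?_, ?_, ?_⟩
  · -- cardinality bound
    have hcT : Fintype.card T = ∑ m : Fin k, N.card ^ (m.1 + 1) := by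
      rw [Fintype.card_sigma]
      refine Finset.sum_congr rfl fun m _ => ?_
      rw [Fintype.card_fun, Fintype.card_coe, Fintype.card_fin]
    have hbase : (1 : ℝ) ≤ (k : ℝ) * 36 ^ d := by nlinarith [h18pos]
    have hterm : ∀ m : Fin k, ((N.card : ℝ)) ^ (m.1 + 1) ≤ ((k : ℝ) * 36 ^ d) ^ k := by
      intro m
      calc ((N.card : ℝ)) ^ (m.1 + 1) ≤ ((k : ℝ) * 36 ^ d) ^ (m.1 + 1) :=
            pow_le_pow_left₀ (by positivity) hNcard _
        _ ≤ ((k : ℝ) * 36 ^ d) ^ k := pow_le_pow_right₀ hbase (by omega)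
    have hsum : (Fintype.card T : ℝ) ≤ (k : ℝ) * ((k : ℝ) * 36 ^ d) ^ k := by
      have hc2 : (Fintype.card T : ℝ) = ∑ m : Fin k, ((N.card : ℝ)) ^ (m.1 + 1) := by
        rw [hcT]; push_cast; rfl
      rw [hc2]
      calc ∑ m : Fin k, ((N.card : ℝ)) ^ (m.1 + 1)
          ≤ ∑ _m : Fin k, ((k : ℝ) * 36 ^ d) ^ k := Finset.sum_le_sum fun m _ => hterm m
        _ = (k : ℝ) * ((k : ℝ) * 36 ^ d) ^ k := by
            rw [Finset.sum_const, Finset.card_univ, Fintype.card_fin, nsmul_eq_mul]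
    refine le_trans hsum ?_
    have h72 : ((72 : ℝ) ^ d * k * μ) ^ k = ((2 : ℝ) ^ d) ^ k * ((k : ℝ) * 36 ^ d) ^ k * (μ : ℝ) ^ k := by
      rw [← mul_pow, ← mul_pow]
      congr 1
      rw [show (72 : ℝ) ^ d = 2 ^ d * 36 ^ d by rw [← mul_pow]; norm_num]
      ring
    rw [h72]
    have hμ1 : (1 : ℝ) ≤ (μ : ℝ) ^ k :=
      one_le_pow₀ (by exact_mod_cast hμ : (1:ℝ) ≤ (μ:ℝ))
    have hkpow : (k : ℝ) ≤ ((2 : ℝ) ^ d) ^ k := by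
      calc (k : ℝ) ≤ 2 ^ k := by exact_mod_cast (Nat.lt_two_pow_self (n := k)).le
        _ ≤ ((2 : ℝ) ^ d) ^ k := by
          rw [← pow_mul]
          exact pow_le_pow_right₀ one_le_two (by nlinarith [hd, hk])
    have hA : (0 : ℝ) ≤ ((k : ℝ) * 36 ^ d) ^ k := by positivity
    calc (k : ℝ) * ((k : ℝ) * 36 ^ d) ^ k
        ≤ ((2 : ℝ) ^ d) ^ k * ((k : ℝ) * 36 ^ d) ^ k := mul_le_mul_of_nonneg_right hkpow hA
      _ ≤ ((2 : ℝ) ^ d) ^ k * ((k : ℝ) * 36 ^ d) ^ k * (μ : ℝ) ^ k :=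
          le_mul_of_one_le_right (by positivity) hμ1
  · -- each chosen curve is a (μ,ε)-curve of complexity ≤ k
    intro i
    refine ⟨?_, pickCurve_isMuEps hε _ _⟩
    have h5 : (e.symm i).1.1 < k := (e.symm i).1.2
    show (e.symm i).1.1 + 1 ≤ k
    omega
  · -- coverage
    intro m' R hm'k hR hdF
    have hclose : ∀ l : Fin (m' + 1), ∃ a ∈ N, dist (R l) a ≤ Δ / 4 := by
      intro l
      obtain ⟨j, hj⟩ := vertices_close P R hΔ hdF l
      obtain ⟨a, ha, hya⟩ := hscov j (R l) (by simpa [mem_closedBall] using hj)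
      exact ⟨a, Finset.mem_insert_of_mem (Finset.mem_biUnion.mpr ⟨j, Finset.mem_univ j, ha⟩),
        hya.le⟩
    choose c hcN hc using hclose
    have hm' : m' < k := by omega
    set t : T := ⟨⟨m', hm'⟩, fun l => ⟨c l, hcN l⟩⟩ with ht
    refine ⟨e t, ?_⟩
    beta_reduce
    rw [Equiv.symm_apply_apply e t]
    show discreteFrechet R (pickCurve μ ε (Δ / 4) m' c) ≤ Δ / 2
    have hex : ∃ S : Fin (m' + 1) → Euc d, IsMuEpsEdges S μ ε ∧ ∀ i, dist (S i) (c i) ≤ Δ / 4 :=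
      ⟨R, hR, fun i => hc i⟩
    refine discreteFrechet_le_of_vertexwise R (pickCurve μ ε (Δ / 4) m' c) ?_
    intro i
    have h1 := pickCurve_close m' c hex i
    have h2 := hc i
    calc dist (R i) (pickCurve μ ε (Δ / 4) m' c i)
        ≤ dist (R i) (c i) + dist (c i) (pickCurve μ ε (Δ / 4) m' c i) := dist_triangle _ _ _
      _ ≤ Δ / 4 + Δ / 4 := by rw [dist_comm (c i)]; linarith
      _ = Δ / 2 := by ring
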